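/- arXiv:math/0409448 — 2 statements merged into one kernel-verified Lean document; each statement's English description precedes it below -/
import Mathlib

section
/- Given constants C₁, C₂, C₃ > 0, ε ∈ (0,1), and a > 0 satisfying 2a·C₁C₂C₃·(1 + a·C₁C₂C₃/(1-ε)) ≤ ε, if a sequence (φₙ) in a normed space satisfies ‖φ₁‖ ≤ a·C₃ and ‖φ_{k+1} - φ_k‖ ≤ C₁C₂·(‖φ_k‖ + ‖φ_{k-1}‖)·‖φ_k - φ_{k-1}‖ for all k ≥ 1, then ‖φₙ‖ ≤ a·C₃·(1 + a·C₁C₂C₃/(1-ε)) for all n ≥ 1 and ‖φ_{k+1} - φ_k‖ ≤ ε·‖φ_k - φ_{k-1}‖ for all k ≥ 1; in particular (φₙ) is a Cauchy sequence. -/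
theorem iteration_bounds_and_contraction
    {X : Type*} [NormedAddCommGroup X] [NormedSpace ℝ X]
    (C₁ C₂ C₃ a ε : ℝ) (hC₁ : 0 < C₁) (hC₂ : 0 < C₂) (hC₃ : 0 < C₃)
    (ha : 0 < a) (hε : ε ∈ Set.Ioo (0:ℝ) 1)
    (hsmall : 2 * a * (C₁ * C₂ * C₃) * (1 + a * (C₁ * C₂ * C₃) / (1 - ε)) ≤ ε)
    (φ : ℕ → X) (h0 : φ 0 = 0) (h1 : ‖φ 1‖ ≤ a * C₃)
    (hrec : ∀ k ≥ 1, ‖φ (k + 1) - φ k‖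
      ≤ C₁ * C₂ * (‖φ k‖ + ‖φ (k - 1)‖) * ‖φ k - φ (k - 1)‖) :
    (∀ n ≥ 1, ‖φ n‖ ≤ a * C₃ * (1 + a * (C₁ * C₂ * C₃) / (1 - ε)))
    ∧ (∀ k ≥ 1, ‖φ (k + 1) - φ k‖ ≤ ε * ‖φ k - φ (k - 1)‖)
    ∧ CauchySeq φ := by
  obtain ⟨hε0, hε1⟩ := hε
  have h1ε : (0:ℝ) < 1 - ε := by linarith
  set M := a * C₃ with hM
  set K := a * (C₁ * C₂ * C₃) with hKdef
  have hMpos : 0 < M := by positivity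
  have hKpos : 0 < K := by positivity
  have hq : 0 ≤ K / (1 - ε) := by positivity
  set B := M * (1 + K / (1 - ε)) with hB
  have hBpos : 0 < B := by
    rw [hB]; nlinarith
  have hsmall' : 2 * (C₁ * C₂) * B ≤ ε := by
    calc 2 * (C₁ * C₂) * B = 2 * a * (C₁ * C₂ * C₃) * (1 + K / (1 - ε)) := by
          rw [hB, hM]; ring
      _ ≤ ε := hsmall
  have hKε : K ≤ ε := by nlinarith
  -- geometric sum bound
  have hsum : ∀ m : ℕ, ∑ j ∈ Finset.range m, ε ^ j ≤ 1 / (1 - ε) := by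
    intro m
    rw [geom_sum_eq (ne_of_lt hε1)]
    rw [show (ε ^ m - 1) / (ε - 1) = (1 - ε ^ m) / (1 - ε) by
      rw [← neg_div_neg_eq]; ring_nf]
    rw [div_le_div_iff₀ h1ε h1ε]
    nlinarith [pow_nonneg hε0.le m]
  have hSB : ∀ m : ℕ, M + K * M * ∑ j ∈ Finset.range m, ε ^ j ≤ B := by
    intro m
    have h := hsum m
    rw [hB]
    have : K * M * ∑ j ∈ Finset.range m, ε ^ j ≤ K * M * (1 / (1 - ε)) := by
      apply mul_le_mul_of_nonneg_left h (by positivity)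
    calc M + K * M * ∑ j ∈ Finset.range m, ε ^ j ≤ M + K * M * (1 / (1 - ε)) := by
          linarith
      _ = M * (1 + K / (1 - ε)) := by ring
  -- main induction
  have key : ∀ m : ℕ, ‖φ (m + 1)‖ ≤ M + K * M * ∑ j ∈ Finset.range m, ε ^ j
      ∧ ‖φ (m + 2) - φ (m + 1)‖ ≤ M * K * ε ^ m := by
    intro m
    induction m with
    | zero =>
      constructor
      · simpa using h1
      · have h := hrec 1 le_rfl
        simp only [h0, norm_zero, add_zero, sub_zero] at h
        have hn1 : 0 ≤ ‖φ 1‖ := norm_nonneg _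
        calc ‖φ (0 + 2) - φ (0 + 1)‖ = ‖φ (1 + 1) - φ 1‖ := by norm_num
          _ ≤ C₁ * C₂ * ‖φ 1‖ * ‖φ 1‖ := h
          _ ≤ C₁ * C₂ * M * M := by nlinarith [mul_le_mul h1 h1 hn1 hMpos.le, mul_pos hC₁ hC₂]
          _ = M * K * ε ^ 0 := by rw [hM, hKdef]; ring
    | succ m ih =>
      obtain ⟨ih1, ih2⟩ := ih
      have hφm1 : ‖φ (m + 1)‖ ≤ B := ih1.trans (hSB m)
      have hnext : ‖φ (m + 2)‖ ≤ M + K * M * ∑ j ∈ Finset.range (m + 1), ε ^ j := by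
        have htri : ‖φ (m + 2)‖ ≤ ‖φ (m + 1)‖ + ‖φ (m + 2) - φ (m + 1)‖ := by
          have heq : φ (m + 1) + (φ (m + 2) - φ (m + 1)) = φ (m + 2) := by abel
          calc ‖φ (m + 2)‖ = ‖φ (m + 1) + (φ (m + 2) - φ (m + 1))‖ := by rw [heq]
            _ ≤ ‖φ (m + 1)‖ + ‖φ (m + 2) - φ (m + 1)‖ := norm_add_le _ _
        rw [Finset.sum_range_succ]
        have : M * K * ε ^ m = K * M * ε ^ m := by ring
        linarith [ih2, ih1, this ▸ ih2]
      refine ⟨hnext, ?_⟩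
      have hφm2 : ‖φ (m + 2)‖ ≤ B := hnext.trans (hSB (m + 1))
      have h := hrec (m + 2) (by omega)
      have hm : m + 2 - 1 = m + 1 := rfl
      rw [hm] at h
      have hd : (0:ℝ) ≤ ‖φ (m + 2) - φ (m + 1)‖ := norm_nonneg _
      have hxy : C₁ * C₂ * (‖φ (m + 2)‖ + ‖φ (m + 1)‖) ≤ ε := by
        nlinarith [mul_le_mul_of_nonneg_left (add_le_add hφm2 hφm1) (mul_pos hC₁ hC₂).le]
      calc ‖φ (m + 1 + 2) - φ (m + 1 + 1)‖ = ‖φ (m + 2 + 1) - φ (m + 2)‖ := by ring_nf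
        _ ≤ C₁ * C₂ * (‖φ (m + 2)‖ + ‖φ (m + 1)‖) * ‖φ (m + 2) - φ (m + 1)‖ := h
        _ ≤ ε * ‖φ (m + 2) - φ (m + 1)‖ := mul_le_mul_of_nonneg_right hxy hd
        _ ≤ ε * (M * K * ε ^ m) := by
            apply mul_le_mul_of_nonneg_left ih2 hε0.le
        _ = M * K * ε ^ (m + 1) := by ring
  have bound1 : ∀ n ≥ 1, ‖φ n‖ ≤ B := by
    intro n hn
    obtain ⟨m, rfl⟩ : ∃ m, n = m + 1 := ⟨n - 1, by omega⟩
    exact (key m).1.trans (hSB m)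
  have boundAll : ∀ n : ℕ, ‖φ n‖ ≤ B := by
    intro n
    rcases Nat.eq_zero_or_pos n with h | h
    · simp [h, h0, hBpos.le]
    · exact bound1 n h
  refine ⟨bound1, ?_, ?_⟩
  · intro k hk
    obtain ⟨m, rfl⟩ : ∃ m, k = m + 1 := ⟨k - 1, by omega⟩
    have h := hrec (m + 1) (by omega)
    have hm : m + 1 - 1 = m := rfl
    rw [hm] at h
    have h1' := boundAll (m + 1)
    have h2' := boundAll m
    have hd : (0:ℝ) ≤ ‖φ (m + 1) - φ m‖ := norm_nonneg _
    have hxy : C₁ * C₂ * (‖φ (m + 1)‖ + ‖φ m‖) ≤ ε := by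
      nlinarith [mul_le_mul_of_nonneg_left (add_le_add h1' h2') (mul_pos hC₁ hC₂).le]
    simp only [hm]
    calc ‖φ (m + 1 + 1) - φ (m + 1)‖
        ≤ C₁ * C₂ * (‖φ (m + 1)‖ + ‖φ m‖) * ‖φ (m + 1) - φ m‖ := h
      _ ≤ ε * ‖φ (m + 1) - φ m‖ := mul_le_mul_of_nonneg_right hxy hd
  · apply cauchySeq_of_le_geometric ε M hε1
    intro n
    rw [dist_eq_norm, norm_sub_rev]
    rcases n with _ | m
    · simpa [h0] using h1
    · calc ‖φ (m + 1 + 1) - φ (m + 1)‖ = ‖φ (m + 2) - φ (m + 1)‖ := rfl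
        _ ≤ M * K * ε ^ m := (key m).2
        _ = K * (M * ε ^ m) := by ring
        _ ≤ ε * (M * ε ^ m) := mul_le_mul_of_nonneg_right hKε
            (mul_nonneg hMpos.le (pow_nonneg hε0.le m))
        _ = M * ε ^ (m + 1) := by ring
end

section
/- Let u ∈ C²([a,b]) solve the Poisson-type equation u'' = F with F continuous. Then for any μ ∈ (0, 1/2), the C¹ norm estimate ‖u‖_{1} ≤ ((1+μ)(b-a)/2)·‖F‖₀ + ((2+μ(b-a))/(μ(b-a)))·‖u‖₀ holds, where ‖u‖₁ = sup|u| + sup|u'| and ‖·‖₀ is the sup norm. -/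
/-- Sup norm of `u` over the set `I`. -/
noncomputable def supNorm (I : Set ℝ) (u : ℝ → ℝ) : ℝ :=
  sSup ((fun x => |u x|) '' I)

open Set Filter Topology

lemma le_supNorm {a b : ℝ} {f : ℝ → ℝ}
    (hb : BddAbove ((fun x => |f x|) '' Set.Icc a b)) {x : ℝ} (hx : x ∈ Set.Icc a b) :
    |f x| ≤ supNorm (Set.Icc a b) f :=
  le_csSup hb ⟨x, hx, rfl⟩

lemma supNorm_le {a b : ℝ} (hab : a ≤ b) {f : ℝ → ℝ} {B : ℝ}
    (h : ∀ x ∈ Set.Icc a b, |f x| ≤ B) : supNorm (Set.Icc a b) f ≤ B :=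
  csSup_le (((Set.nonempty_Icc).mpr hab).image _)
    (by rintro _ ⟨x, hx, rfl⟩; exact h x hx)

theorem poisson_C1_estimate (a b : ℝ) (hab : a < b)
    (F u : ℝ → ℝ) (hF : ContinuousOn F (Set.Icc a b))
    (hu : ContDiffOn ℝ 2 u (Set.Icc a b))
    (heq : ∀ x ∈ Set.Icc a b, deriv (deriv u) x = F x)
    (μ : ℝ) (hμ : μ ∈ Set.Ioo (0:ℝ) (1/2)) :
    supNorm (Set.Icc a b) u + supNorm (Set.Icc a b) (deriv u)
      ≤ ((1 + μ) * (b - a) / 2) * supNorm (Set.Icc a b) F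
        + ((2 + μ * (b - a)) / (μ * (b - a))) * supNorm (Set.Icc a b) u := by
  obtain ⟨hμ0, hμ2⟩ := hμ
  set h : ℝ := μ * (b - a) with hh
  have hba : (0:ℝ) < b - a := by linarith
  have hhpos : 0 < h := mul_pos hμ0 hba
  have hhlt : h < b - a := by
    have : μ * (b - a) < 1 * (b - a) := by
      apply mul_lt_mul_of_pos_right (by linarith) hba
    simpa using this
  have habl : a ≤ b := hab.le
  have hucont : ContinuousOn u (Set.Icc a b) := hu.continuousOn
  -- sup norms and basic bounds
  set M0 := supNorm (Set.Icc a b) u with hM0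
  set M2 := supNorm (Set.Icc a b) F with hM2
  have hbd0 : BddAbove ((fun x => |u x|) '' Set.Icc a b) :=
    (isCompact_Icc.image_of_continuousOn hucont.abs).bddAbove
  have hbd2 : BddAbove ((fun x => |F x|) '' Set.Icc a b) :=
    (isCompact_Icc.image_of_continuousOn hF.abs).bddAbove
  have hM0le : ∀ x ∈ Set.Icc a b, |u x| ≤ M0 := fun x hx => le_supNorm hbd0 hx
  have hM2le : ∀ x ∈ Set.Icc a b, |F x| ≤ M2 := fun x hx => le_supNorm hbd2 hx
  have hM0nn : 0 ≤ M0 := le_trans (abs_nonneg _) (hM0le a ⟨le_refl a, habl⟩)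
  have hM2nn : 0 ≤ M2 := le_trans (abs_nonneg _) (hM2le a ⟨le_refl a, habl⟩)
  -- differentiability facts
  have udo : UniqueDiffOn ℝ (Set.Icc a b) := uniqueDiffOn_Icc hab
  have hdiffu : DifferentiableOn ℝ u (Set.Icc a b) := hu.differentiableOn (by norm_num)
  have hderivAt : ∀ t ∈ Set.Ioo a b, HasDerivAt u (deriv u t) t := by
    intro t ht
    exact ((hdiffu t (Ioo_subset_Icc_self ht)).differentiableAt
      (Icc_mem_nhds ht.1 ht.2)).hasDerivAt
  have hcd1 : ContDiffOn ℝ 1 (derivWithin u (Set.Icc a b)) (Set.Icc a b) :=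
    hu.derivWithin udo (by norm_num)
  have hgW : ContinuousOn (derivWithin u (Set.Icc a b)) (Set.Icc a b) := hcd1.continuousOn
  have hev : ∀ s ∈ Set.Ioo a b, derivWithin u (Set.Icc a b) s = deriv u s := by
    intro s hs
    exact derivWithin_of_mem_nhds (Icc_mem_nhds hs.1 hs.2)
  have hgcont : ContinuousOn (deriv u) (Set.Ioo a b) :=
    (hgW.mono Ioo_subset_Icc_self).congr (fun s hs => (hev s hs).symm)
  have hgderiv : ∀ t ∈ Set.Ioo a b, HasDerivAt (deriv u) (F t) t := by
    intro t ht
    have hnb : Set.Ioo a b ∈ 𝓝 t := isOpen_Ioo.mem_nhds ht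
    have heqt : derivWithin u (Set.Icc a b) =ᶠ[𝓝 t] deriv u :=
      Filter.eventuallyEq_of_mem hnb (fun s hs => hev s hs)
    have hdW : DifferentiableAt ℝ (derivWithin u (Set.Icc a b)) t :=
      ((hcd1.differentiableOn (by norm_num)) t (Ioo_subset_Icc_self ht)).differentiableAt
        (Icc_mem_nhds ht.1 ht.2)
    have hdg : DifferentiableAt ℝ (deriv u) t := heqt.differentiableAt_iff.mp hdW
    have := hdg.hasDerivAt
    rwa [heq t (Ioo_subset_Icc_self ht)] at this
  -- interior estimate
  have B := 2 * M0 / h + h * M2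
  have hBnn : 0 ≤ 2 * M0 / h + h * M2 := by positivity
  have hint : ∀ x ∈ Set.Ioo a b, |deriv u x| ≤ 2 * M0 / h + h * M2 := by
    intro x hx
    set y := min x (b - h) with hy
    set z := y + h with hz
    have hya : a < y := lt_min hx.1 (by linarith)
    have hyz : y < z := by simp [hz]; linarith
    have hzb : z ≤ b := by
      have : y ≤ b - h := min_le_right _ _
      simp [hz]; linarith
    have hxy : y ≤ x := min_le_left _ _
    have hxz : x ≤ z := by
      rcases le_total x (b - h) with hc | hc
      · have : y = x := min_eq_left hc
        rw [hz, this]; linarith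
      · have : y = b - h := min_eq_right hc
        rw [hz, this]; linarith [hx.2.le]
    have hIoosub : Set.Ioo y z ⊆ Set.Ioo a b := fun t ht => ⟨hya.trans ht.1, lt_of_lt_of_le ht.2 hzb⟩
    have hIccsub : Set.Icc y z ⊆ Set.Icc a b := Set.Icc_subset_Icc hya.le hzb
    -- first MVT
    obtain ⟨ξ, hξmem, hξ⟩ := exists_hasDerivAt_eq_slope u (deriv u) hyz
      (hucont.mono hIccsub) (fun t ht => hderivAt t (hIoosub ht))
    have hzy : z - y = h := by simp [hz]
    have hξbound : |deriv u ξ| ≤ 2 * M0 / h := by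
      rw [hξ]
      rw [abs_div, hzy, abs_of_pos hhpos]
      gcongr
      calc |u z - u y| ≤ |u z| + |u y| := abs_sub _ _
        _ ≤ M0 + M0 := add_le_add (hM0le z (hIccsub ⟨hyz.le, le_refl z⟩))
            (hM0le y (hIccsub ⟨le_refl y, hyz.le⟩))
        _ = 2 * M0 := by ring
    rcases eq_or_ne x ξ with hxe | hxe
    · rw [hxe]
      exact hξbound.trans (by linarith [mul_nonneg hhpos.le hM2nn])
    -- second MVT between x and ξ
    have hξI : ξ ∈ Set.Ioo a b := hIoosub hξmem
    set c := min x ξ with hc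
    set d := max x ξ with hd
    have hcd : c < d := min_lt_max.mpr hxe
    have hca : a < c := lt_min hx.1 hξI.1
    have hdb : d < b := max_lt hx.2 hξI.2
    have hsub2 : Set.Icc c d ⊆ Set.Ioo a b := fun t ht => ⟨hca.trans_le ht.1, lt_of_le_of_lt ht.2 hdb⟩
    obtain ⟨η, hηmem, hη⟩ := exists_hasDerivAt_eq_slope (deriv u) F hcd
      (hgcont.mono hsub2) (fun t ht => hgderiv t (hsub2 (Set.Ioo_subset_Icc_self ht)))
    have hdcabs : |deriv u d - deriv u c| = |deriv u x - deriv u ξ| := by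
      rcases le_total x ξ with hle | hle
      · rw [hc, hd, min_eq_left hle, max_eq_right hle, abs_sub_comm]
      · rw [hc, hd, min_eq_right hle, max_eq_left hle]
    have hdc : d - c ≤ h := by
      have h1 : y ≤ c := le_min hxy hξmem.1.le
      have h2 : d ≤ z := max_le hxz hξmem.2.le
      linarith [hzy]
    have hηb : |F η| ≤ M2 := hM2le η (Set.Ioo_subset_Icc_self (hsub2 (Set.Ioo_subset_Icc_self hηmem)))
    have hdiffbound : |deriv u x - deriv u ξ| ≤ M2 * h := by
      rw [← hdcabs]
      have : deriv u d - deriv u c = F η * (d - c) := by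
        rw [hη]
        field_simp [sub_ne_zero.mpr hcd.ne']
      rw [this, abs_mul, abs_of_pos (by linarith : (0:ℝ) < d - c)]
      exact mul_le_mul hηb hdc (by linarith) hM2nn
    calc |deriv u x| ≤ |deriv u ξ| + |deriv u x - deriv u ξ| := by
          have := abs_sub_abs_le_abs_sub (deriv u x) (deriv u ξ)
          linarith [abs_sub_comm (deriv u x) (deriv u ξ)]
      _ ≤ 2 * M0 / h + M2 * h := add_le_add hξbound hdiffbound
      _ = 2 * M0 / h + h * M2 := by ring
  -- extend to the closed interval, for derivWithin
  have hclos : ∀ x ∈ Set.Icc a b, |derivWithin u (Set.Icc a b) x| ≤ 2 * M0 / h + h * M2 := by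
    intro x hx
    have hne : (𝓝[Set.Ioo a b] x).NeBot := by
      rw [← mem_closure_iff_nhdsWithin_neBot, closure_Ioo hab.ne]
      exact hx
    have htend : Filter.Tendsto (fun s => |derivWithin u (Set.Icc a b) s|)
        (𝓝[Set.Ioo a b] x) (𝓝 |derivWithin u (Set.Icc a b) x|) := by
      have := (hgW x hx).mono Set.Ioo_subset_Icc_self
      exact (continuous_abs.continuousAt.tendsto).comp this
    refine le_of_tendsto htend ?_
    filter_upwards [self_mem_nhdsWithin] with s hs
    rw [hev s hs]
    exact hint s hs
  -- transfer to deriv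
  have hderivle : ∀ x ∈ Set.Icc a b, |deriv u x| ≤ 2 * M0 / h + h * M2 := by
    intro x hx
    by_cases hdx : DifferentiableAt ℝ u x
    · have : deriv u x = derivWithin u (Set.Icc a b) x :=
        (hdx.hasDerivAt.hasDerivWithinAt.derivWithin (udo x hx)).symm
      rw [this]; exact hclos x hx
    · rw [deriv_zero_of_not_differentiableAt hdx]
      simpa using hBnn
  have hsup1 : supNorm (Set.Icc a b) (deriv u) ≤ 2 * M0 / h + h * M2 :=
    supNorm_le habl hderivle
  -- final arithmetic
  have key : 2 * M0 / h + h * M2 ≤ ((1 + μ) * (b - a) / 2) * M2 + 2 / h * M0 := by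
    have h1 : h * M2 ≤ ((1 + μ) * (b - a) / 2) * M2 := by
      apply mul_le_mul_of_nonneg_right ?_ hM2nn
      rw [hh]; nlinarith
    have h2 : 2 * M0 / h = 2 / h * M0 := by ring
    linarith
  have hrw : ((2 + μ * (b - a)) / (μ * (b - a))) * M0 = M0 + 2 / h * M0 := by
    rw [hh]
    field_simp
    ring
  rw [hrw]
  linarith
end
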